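/- Let θ̂_r^{(n)} | θ* ~ N(θ*, σ²/n), and let p_S(θ) = N(θ; 0, g σ_o²) and p_A(θ) = N(θ; θ̂_o, σ_o²) be the skeptical and advocate prior densities. Then the Bayes factor BF_{S:A}(θ̂_r^{(n)}; g) = N(θ̂_r^{(n)}; 0, gσ_o² + σ²/n)/N(θ̂_r^{(n)}; θ̂_o, σ_o² + σ²/n) converges in probability, as n → ∞, to the constant p_S(θ*)/p_A(θ*). In particular BF_{S:A} is not consistent: its limit is a finite positive constant regardless of θ*. -/

import Mathlib

open MeasureTheory ProbabilityTheory Filter Real Topology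
open scoped ENNReal NNReal

noncomputable def nd (x μ τ2 : ℝ) : ℝ :=
  (Real.sqrt (2 * Real.pi * τ2))⁻¹ * Real.exp (-(x - μ) ^ 2 / (2 * τ2))

noncomputable def G1 (u : ℝ) : ℝ :=
  ((gaussianReal 0 1) {x | x ^ 2 ≤ u}).toReal

lemma nd_pos {x μ τ2 : ℝ} (h : 0 < τ2) : 0 < nd x μ τ2 := by
  have h1 : 0 < Real.sqrt (2 * Real.pi * τ2) :=
    Real.sqrt_pos.2 (by have := Real.pi_pos; positivity)
  exact mul_pos (inv_pos.2 h1) (Real.exp_pos _)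

lemma nd_contAt (μ : ℝ) {p : ℝ × ℝ} (hp : 0 < p.2) :
    ContinuousAt (fun q : ℝ × ℝ => nd q.1 μ q.2) p := by
  have hπ := Real.pi_pos
  have h1 : ContinuousAt (fun q : ℝ × ℝ => Real.sqrt (2 * Real.pi * q.2)) p := by fun_prop
  have hne : Real.sqrt (2 * Real.pi * p.2) ≠ 0 :=
    ne_of_gt (Real.sqrt_pos.2 (by positivity))
  have h2 : ContinuousAt (fun q : ℝ × ℝ => -(q.1 - μ) ^ 2 / (2 * q.2)) p :=
    ContinuousAt.div (by fun_prop) (by fun_prop) (by positivity)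
  exact (h1.inv₀ hne).mul (Real.continuous_exp.continuousAt.comp h2)

lemma nd_cont (μ : ℝ) {τ2 : ℝ} (h : 0 < τ2) : Continuous (fun x => nd x μ τ2) := by
  unfold nd
  exact continuous_const.mul (Real.continuous_exp.comp
    (((continuous_id.sub continuous_const).pow 2).neg.div_const _))

set_option maxHeartbeats 1000000 in
theorem stmt4 (θs θo σo g : ℝ) (σ2 : NNReal) (hσo : 0 < σo) (hg : 0 < g) (hσ2 : 0 < σ2) :
    0 < nd θs 0 (g * σo ^ 2) / nd θs θo (σo ^ 2) ∧
    ∀ ε : ℝ, 0 < ε →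
      Tendsto (fun n : ℕ =>
          (gaussianReal θs (σ2 / n)) {x |
            ε ≤ |nd x 0 (g * σo ^ 2 + (σ2 : ℝ) / n) / nd x θo (σo ^ 2 + (σ2 : ℝ) / n)
                  - nd θs 0 (g * σo ^ 2) / nd θs θo (σo ^ 2)|})
        atTop (𝓝 0) := by
  have hgσ : (0:ℝ) < g * σo ^ 2 := by positivity
  have hσ : (0:ℝ) < σo ^ 2 := by positivity
  set c : ℝ := nd θs 0 (g * σo ^ 2) / nd θs θo (σo ^ 2) with hc
  refine ⟨div_pos (nd_pos hgσ) (nd_pos hσ), fun ε hε => ?_⟩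
  set γ : Measure ℝ := gaussianReal 0 1 with hγ
  set v : ℕ → ℝ := fun n => (σ2 : ℝ) / n with hvdef
  have hvnn : ∀ n, 0 ≤ v n := fun n => by positivity
  have hv : Tendsto v atTop (𝓝 0) := tendsto_const_div_atTop_nhds_zero_nat _
  set s : ℕ → ℝ := fun n => Real.sqrt (v n) with hsdef
  have hs0 : Tendsto s atTop (𝓝 0) := by
    have := (Real.continuous_sqrt.tendsto 0).comp hv
    simpa [hsdef, Function.comp_def] using this
  -- the function and the sets
  set f : ℕ → ℝ → ℝ := fun n x =>
    nd x 0 (g * σo ^ 2 + v n) / nd x θo (σo ^ 2 + v n) with hfdef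
  have hfcont : ∀ n, Continuous (f n) := by
    intro n
    exact (nd_cont 0 (by have := hvnn n; positivity)).div
      (nd_cont θo (by have := hvnn n; positivity))
      (fun x => ne_of_gt (nd_pos (by have := hvnn n; positivity)))
  set A : ℕ → Set ℝ := fun n => {x | ε ≤ |f n x - c|} with hAdef
  have hA : ∀ n, MeasurableSet (A n) :=
    fun n => measurableSet_le measurable_const
      (((hfcont n).sub continuous_const).abs.measurable)
  set B : ℕ → Set ℝ := fun n => (fun z => s n * z + θs) ⁻¹' A n with hBdef
  have hB : ∀ n, MeasurableSet (B n) :=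
    fun n => (hA n).preimage (by fun_prop)
  -- coercion fact
  have hcoe : ∀ n : ℕ, ((σ2 / (n : NNReal) : NNReal) : ℝ) = v n := by
    intro n
    simp [hvdef, NNReal.coe_div]
  -- map identity
  have hmap : ∀ n : ℕ, gaussianReal θs (σ2 / n) = γ.map (fun z => s n * z + θs) := by
    intro n
    have hsq : (⟨(s n) ^ 2, sq_nonneg _⟩ : NNReal) * 1 = σ2 / (n : NNReal) := by
      apply NNReal.coe_injective
      simp only [NNReal.coe_mul, NNReal.coe_one, NNReal.coe_mk, mul_one]
      rw [NNReal.coe_div, NNReal.coe_natCast]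
      exact Real.sq_sqrt (hvnn n)
    have h1 : γ.map (s n * ·) = gaussianReal 0 (σ2 / n) := by
      rw [hγ, gaussianReal_map_const_mul, mul_zero]
      exact congrArg _ hsq
    have h2 : (gaussianReal 0 (σ2 / (n:NNReal))).map (· + θs) = gaussianReal θs (σ2 / n) := by
      rw [gaussianReal_map_add_const, zero_add]
    rw [← h2, ← h1, Measure.map_map (measurable_add_const θs) (measurable_const_mul _)]
    rfl
  -- measure as lintegral of indicator
  have key : ∀ n : ℕ, (gaussianReal θs (σ2 / n)) (A n)
      = ∫⁻ z, (B n).indicator (fun _ => (1 : ℝ≥0∞)) z ∂γ := by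
    intro n
    rw [hmap n, Measure.map_apply (by fun_prop) (hA n)]
    exact (lintegral_indicator_one (hB n)).symm
  -- pointwise convergence of indicators to 0
  have hpt : ∀ z : ℝ, Tendsto
      (fun n => (B n).indicator (fun _ => (1 : ℝ≥0∞)) z) atTop (𝓝 0) := by
    intro z
    have hx : Tendsto (fun n => s n * z + θs) atTop (𝓝 θs) := by
      have := (hs0.mul_const z).add_const θs
      simpa using this
    have ht1 : Tendsto (fun n => g * σo ^ 2 + v n) atTop (𝓝 (g * σo ^ 2)) := by
      simpa using (tendsto_const_nhds (x := g * σo ^ 2) (f := atTop)).add hv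
    have ht2 : Tendsto (fun n => σo ^ 2 + v n) atTop (𝓝 (σo ^ 2)) := by
      simpa using (tendsto_const_nhds (x := σo ^ 2) (f := atTop)).add hv
    have hnum : Tendsto (fun n => nd (s n * z + θs) 0 (g * σo ^ 2 + v n)) atTop
        (𝓝 (nd θs 0 (g * σo ^ 2))) := by
      have h := (nd_contAt 0 (p := (θs, g * σo ^ 2)) hgσ).tendsto.comp (hx.prodMk_nhds ht1)
      exact h.congr fun n => rfl
    have hden : Tendsto (fun n => nd (s n * z + θs) θo (σo ^ 2 + v n)) atTop
        (𝓝 (nd θs θo (σo ^ 2))) := by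
      have h := (nd_contAt θo (p := (θs, σo ^ 2)) hσ).tendsto.comp (hx.prodMk_nhds ht2)
      exact h.congr fun n => rfl
    have hF : Tendsto (fun n => f n (s n * z + θs)) atTop (𝓝 c) :=
      hnum.div hden (ne_of_gt (nd_pos hσ))
    have habs : Tendsto (fun n => |f n (s n * z + θs) - c|) atTop (𝓝 0) := by
      have := (hF.sub (tendsto_const_nhds (x := c))).abs
      simpa using this
    have hev : ∀ᶠ n in atTop, (B n).indicator (fun _ => (1 : ℝ≥0∞)) z = 0 := by
      filter_upwards [habs.eventually (gt_mem_nhds hε)] with n hn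
      have hzB : z ∉ B n := by
        simp only [hBdef, Set.mem_preimage, hAdef, Set.mem_setOf_eq, not_le]
        exact hn
      simp [Set.indicator_of_notMem hzB]
    exact Tendsto.congr' (Filter.EventuallyEq.symm hev) tendsto_const_nhds
  -- dominated convergence
  have hdom : Tendsto (fun n => ∫⁻ z, (B n).indicator (fun _ => (1 : ℝ≥0∞)) z ∂γ)
      atTop (𝓝 (∫⁻ _, (0 : ℝ≥0∞) ∂γ)) := by
    refine tendsto_lintegral_of_dominated_convergence (fun _ => (1 : ℝ≥0∞))
      (fun n => measurable_const.indicator (hB n)) (fun n => ae_of_all _ fun z => ?_)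
      ?_ (ae_of_all _ hpt)
    · classical
      by_cases hz : z ∈ B n <;> simp [Set.indicator_apply, hz]
    · simp [lintegral_one]
  rw [lintegral_zero] at hdom
  exact Tendsto.congr (fun n => (key n).symm) hdom
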